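/- arXiv:1404.6574 — 2 statements merged into one kernel-verified Lean document; each statement's English description precedes it below -/
import Mathlib

section
/- Let a and b be words in {↑,↓} of lengths k and l, set K = k + l, and let C : V(ab) → V(a↑↓b) be the k-linear map given on basis vectors by C(v_i) = ∑_{c∈B} v_{i⟨c⟩}, where i⟨c⟩ ∈ B^{K+2} agrees with i in the first k positions, has entry c in positions k+1 and k+2, and agrees with the last l entries of i in positions k+3,…,K+2. Let p be a positive integer such that the p-th letter of the word a↓↓b is ↑. Then: (i) C ∘ (p,q)^{ab}_λ = (p,q)^{a↑↓b}_λ ∘ C whenever q ≠ p and p, q ≤ k; (ii) C ∘ (p,q−2)^{ab}_λ = (p,q)^{a↑↓b}_λ ∘ C whenever p ≤ k and k+2 < q ≤ K+2; (iii) C ∘ (p−2,q)^{ab}_λ = (p,q)^{a↑↓b}_λ ∘ C whenever p > k+2 and q ≤ k; (iv) C ∘ (p−2,q−2)^{ab}_λ = (p,q)^{a↑↓b}_λ ∘ C whenever q ≠ p and k+2 < p, q ≤ K+2; (v) (p,k+1)^{a↑↓b}_λ ∘ C + (p,k+2)^{a↑↓b}_λ ∘ C = 0. -/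
open Finset

/-- The set of boxes of the pyramid associated to `lam` (`Box.1` is the column, 0-based). -/
abbrev Box {ℓ : ℕ} (lam : Fin ℓ → ℕ) : Type := (j : Fin ℓ) × Fin (lam j)

/-- A sequence is unimodular: it weakly increases up to some index `κ` and weakly
decreases afterwards. -/
def Unimodular {ℓ : ℕ} (lam : Fin ℓ → ℕ) : Prop :=
  ∃ κ : Fin ℓ, (∀ i j : Fin ℓ, i ≤ j → j ≤ κ → lam i ≤ lam j) ∧
    (∀ i j : Fin ℓ, κ ≤ i → i ≤ j → lam j ≤ lam i)

/-- The free `k`-module `V(a)` with basis indexed by `K`-tuples of boxes. -/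
abbrev V (k : Type*) [CommRing k] {ℓ : ℕ} (lam : Fin ℓ → ℕ) (K : ℕ) : Type _ :=
  (Fin K → Box lam) →₀ k

/-- The modified transposition `(p,q)^a_λ` (positions are 0-based elements of `Fin K`;
the letter `↑` is `true` and `↓` is `false`). -/
noncomputable def modT (k : Type*) [CommRing k] {ℓ K : ℕ} (lam : Fin ℓ → ℕ)
    (a : Fin K → Bool) (p q : Fin K) : Module.End k (V k lam K) :=
  Finsupp.lift (V k lam K) k (Fin K → Box lam) (fun j =>
    if a q then
      if q < p then
        (if (j p).1 ≤ (j q).1 then Finsupp.single (j ∘ Equiv.swap p q) (1 : k) else 0)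
      else
        (if (j q).1 < (j p).1 then -Finsupp.single (j ∘ Equiv.swap p q) (1 : k) else 0)
    else
      if q < p then
        (if j p = j q then
          -∑ c ∈ univ.filter (fun c : Box lam => (j p).1 ≤ c.1),
            Finsupp.single (Function.update (Function.update j p c) q c) (1 : k)
        else 0)
      else
        (if j p = j q then
          ∑ c ∈ univ.filter (fun c : Box lam => c.1 < (j p).1),
            Finsupp.single (Function.update (Function.update j p c) q c) (1 : k)
        else 0))
/-- The concatenation `ab` of two words. -/
def catW {kk ll : ℕ} (a : Fin kk → Bool) (b : Fin ll → Bool) : Fin (kk + ll) → Bool :=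
  fun t => if h : t.val < kk then a ⟨t.val, h⟩ else b ⟨t.val - kk, by have := t.isLt; omega⟩

/-- The word `a x y b` obtained by inserting the two letters `x, y` between `a` and `b`. -/
def insW {kk ll : ℕ} (a : Fin kk → Bool) (x y : Bool) (b : Fin ll → Bool) :
    Fin (kk + ll + 2) → Bool :=
  fun t =>
    if h : t.val < kk then a ⟨t.val, h⟩
    else if h2 : t.val = kk then x
    else if h3 : t.val = kk + 1 then y
    else b ⟨t.val - (kk + 2), by have := t.isLt; omega⟩

/-- `i⟨c⟩`: insert the box `c` in positions `k+1` and `k+2` of the tuple `i`. -/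
def insB {ℓ : ℕ} {lam : Fin ℓ → ℕ} {kk ll : ℕ} (i : Fin (kk + ll) → Box lam) (c : Box lam) :
    Fin (kk + ll + 2) → Box lam :=
  fun t =>
    if h : t.val < kk then i ⟨t.val, by omega⟩
    else if h2 : t.val < kk + 2 then c
    else i ⟨t.val - 2, by have := t.isLt; omega⟩

/-- The map `C : V(ab) → V(a↑↓b)`, `v_i ↦ ∑_{c ∈ B} v_{i⟨c⟩}`. -/
noncomputable def Cmap (k : Type*) [CommRing k] {ℓ : ℕ} (lam : Fin ℓ → ℕ) (kk ll : ℕ) :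
    V k lam (kk + ll) →ₗ[k] V k lam (kk + ll + 2) :=
  Finsupp.lift (V k lam (kk + ll + 2)) k (Fin (kk + ll) → Box lam)
    (fun i => ∑ c : Box lam, Finsupp.single (insB i c) (1 : k))
section Helpers

variable {k : Type*} [CommRing k] {ℓ : ℕ} {lam : Fin ℓ → ℕ} {kk ll : ℕ}

/-- The inclusion of positions of `ab` into positions of `a↑↓b`. -/
def ins2 (kk ll : ℕ) (t : Fin (kk + ll)) : Fin (kk + ll + 2) :=
  if h : t.val < kk then ⟨t.val, by omega⟩ else ⟨t.val + 2, by have := t.isLt; omega⟩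

lemma ins2_val (t : Fin (kk + ll)) :
    (ins2 kk ll t).val = if t.val < kk then t.val else t.val + 2 := by
  unfold ins2; split <;> simp_all

lemma ins2_eq_of_lt {t : ℕ} (h : t < kk) (h2 : t < kk + ll) :
    ins2 kk ll ⟨t, h2⟩ = ⟨t, by omega⟩ := by
  apply Fin.ext; rw [ins2_val]; simp [h]

lemma ins2_eq_of_ge {t : ℕ} (h : kk ≤ t) (h2 : t < kk + ll) :
    ins2 kk ll ⟨t, h2⟩ = ⟨t + 2, by omega⟩ := by
  apply Fin.ext; rw [ins2_val]; simp [Nat.not_lt.2 h]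

lemma ins2_lt_iff {s t : Fin (kk + ll)} : ins2 kk ll s < ins2 kk ll t ↔ s < t := by
  simp only [Fin.lt_def, ins2_val]; split_ifs <;> omega

lemma ins2_inj {s t : Fin (kk + ll)} (h : ins2 kk ll s = ins2 kk ll t) : s = t := by
  have := congrArg Fin.val h
  rw [ins2_val, ins2_val] at this
  apply Fin.ext; split_ifs at this <;> omega

lemma ins2_ne (t : Fin (kk + ll)) : (ins2 kk ll t).val ≠ kk ∧ (ins2 kk ll t).val ≠ kk + 1 := by
  rw [ins2_val]; split_ifs <;> omega

lemma insB_ins2 (i : Fin (kk + ll) → Box lam) (c : Box lam) (t : Fin (kk + ll)) :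
    insB i c (ins2 kk ll t) = i t := by
  unfold insB
  by_cases ht : t.val < kk
  · rw [ins2_eq_of_lt ht]; simp [ht]
  · rw [ins2_eq_of_ge (Nat.not_lt.1 ht)]
    have ht' : kk ≤ t.val := Nat.not_lt.1 ht
    simp only [show ¬((⟨t.val + 2, by omega⟩ : Fin (kk + ll + 2)).val < kk) by simp; omega,
      show ¬((⟨t.val + 2, by omega⟩ : Fin (kk + ll + 2)).val < kk + 2) by simp; omega,
      dif_neg, not_false_iff]
    congr 1

lemma insB_kk (i : Fin (kk + ll) → Box lam) (c : Box lam) (h : kk < kk + ll + 2) :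
    insB i c ⟨kk, h⟩ = c := by
  unfold insB
  rw [dif_neg (show ¬((⟨kk, h⟩ : Fin (kk + ll + 2)).val < kk) by simp)]
  rw [dif_pos (show ((⟨kk, h⟩ : Fin (kk + ll + 2)).val < kk + 2) by simp)]

lemma insB_kk1 (i : Fin (kk + ll) → Box lam) (c : Box lam) (h : kk + 1 < kk + ll + 2) :
    insB i c ⟨kk + 1, h⟩ = c := by
  unfold insB
  rw [dif_neg (show ¬((⟨kk + 1, h⟩ : Fin (kk + ll + 2)).val < kk) by simp)]
  rw [dif_pos (show ((⟨kk + 1, h⟩ : Fin (kk + ll + 2)).val < kk + 2) by simp)]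

lemma exists_ins2 (s : Fin (kk + ll + 2)) (h1 : s.val ≠ kk) (h2 : s.val ≠ kk + 1) :
    ∃ t, ins2 kk ll t = s := by
  by_cases hs : s.val < kk
  · exact ⟨⟨s.val, by omega⟩, by rw [ins2_eq_of_lt hs]⟩
  · have hs2 : kk + 2 ≤ s.val := by omega
    refine ⟨⟨s.val - 2, by have := s.isLt; omega⟩, ?_⟩
    rw [ins2_eq_of_ge (by omega)]
    apply Fin.ext; simp; omega

lemma insW_ins2 (a : Fin kk → Bool) (x y : Bool) (b : Fin ll → Bool) (t : Fin (kk + ll)) :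
    insW a x y b (ins2 kk ll t) = catW a b t := by
  unfold insW catW
  by_cases ht : t.val < kk
  · rw [ins2_eq_of_lt ht]; simp [ht]
  · rw [ins2_eq_of_ge (Nat.not_lt.1 ht)]
    have ht' : kk ≤ t.val := Nat.not_lt.1 ht
    rw [dif_neg (show ¬((⟨t.val + 2, by omega⟩ : Fin (kk + ll + 2)).val < kk) by simp; omega),
      dif_neg (show ¬((⟨t.val + 2, by omega⟩ : Fin (kk + ll + 2)).val = kk) by simp; omega),
      dif_neg (show ¬((⟨t.val + 2, by omega⟩ : Fin (kk + ll + 2)).val = kk + 1) by simp; omega),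
      dif_neg ht]
    congr 1; apply Fin.ext; simp

lemma insW_kk (a : Fin kk → Bool) (x y : Bool) (b : Fin ll → Bool) (h : kk < kk + ll + 2) :
    insW a x y b ⟨kk, h⟩ = x := by
  unfold insW
  rw [dif_neg (show ¬((⟨kk, h⟩ : Fin (kk + ll + 2)).val < kk) by simp), dif_pos rfl]

lemma insW_kk1 (a : Fin kk → Bool) (x y : Bool) (b : Fin ll → Bool) (h : kk + 1 < kk + ll + 2) :
    insW a x y b ⟨kk + 1, h⟩ = y := by
  unfold insW
  rw [dif_neg (show ¬((⟨kk + 1, h⟩ : Fin (kk + ll + 2)).val < kk) by simp),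
    dif_neg (show ¬((⟨kk + 1, h⟩ : Fin (kk + ll + 2)).val = kk) by simp), dif_pos rfl]

lemma update_insB (i : Fin (kk + ll) → Box lam) (c d : Box lam) (t : Fin (kk + ll)) :
    Function.update (insB i c) (ins2 kk ll t) d = insB (Function.update i t d) c := by
  funext s
  by_cases hs : s = ins2 kk ll t
  · subst hs
    rw [Function.update_self, insB_ins2, Function.update_self]
  · rw [Function.update_of_ne hs]
    by_cases h1 : s.val = kk
    · have hss : s = ⟨kk, by omega⟩ := Fin.ext h1
      rw [hss, insB_kk, insB_kk]
    by_cases h2 : s.val = kk + 1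
    · have hss : s = ⟨kk + 1, by omega⟩ := Fin.ext h2
      rw [hss, insB_kk1, insB_kk1]
    obtain ⟨u, hu⟩ := exists_ins2 s h1 h2
    subst hu
    rw [insB_ins2, insB_ins2, Function.update_of_ne (fun h => hs (by rw [h]))]

lemma ins2_swap (p q t : Fin (kk + ll)) :
    Equiv.swap (ins2 kk ll p) (ins2 kk ll q) (ins2 kk ll t) = ins2 kk ll (Equiv.swap p q t) := by
  by_cases htp : t = p
  · subst htp; rw [Equiv.swap_apply_left, Equiv.swap_apply_left]
  by_cases htq : t = q
  · subst htq; rw [Equiv.swap_apply_right, Equiv.swap_apply_right]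
  rw [Equiv.swap_apply_of_ne_of_ne (fun h => htp (ins2_inj h)) (fun h => htq (ins2_inj h)),
    Equiv.swap_apply_of_ne_of_ne htp htq]

lemma swap_insB (i : Fin (kk + ll) → Box lam) (c : Box lam) (p q : Fin (kk + ll)) :
    insB i c ∘ (Equiv.swap (ins2 kk ll p) (ins2 kk ll q)) =
      insB (i ∘ Equiv.swap p q) c := by
  funext s
  simp only [Function.comp_apply]
  by_cases h1 : s.val = kk
  · have hs : s = ⟨kk, by omega⟩ := Fin.ext h1
    rw [hs, Equiv.swap_apply_of_ne_of_ne (fun h => ((ins2_ne p).1 (by rw [← h])))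
      (fun h => ((ins2_ne q).1 (by rw [← h]))), insB_kk, insB_kk]
  by_cases h2 : s.val = kk + 1
  · have hs : s = ⟨kk + 1, by omega⟩ := Fin.ext h2
    rw [hs, Equiv.swap_apply_of_ne_of_ne (fun h => ((ins2_ne p).2 (by rw [← h])))
      (fun h => ((ins2_ne q).2 (by rw [← h]))), insB_kk1, insB_kk1]
  obtain ⟨u, hu⟩ := exists_ins2 s h1 h2
  subst hu
  rw [ins2_swap, insB_ins2, insB_ins2, Function.comp_apply]

lemma lhom_ext1 {X : Type*} {M : Type*} [AddCommMonoid M] [Module k M]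
    {φ ψ : (X →₀ k) →ₗ[k] M}
    (h : ∀ x, φ (Finsupp.single x 1) = ψ (Finsupp.single x 1)) : φ = ψ := by
  apply Finsupp.lhom_ext
  intro x r
  rw [← mul_one r, ← Finsupp.smul_single', map_smul, map_smul, h]

lemma lift_single {X : Type*} {M : Type*} [AddCommMonoid M] [Module k M]
    (f : X → M) (x : X) : Finsupp.lift M k X f (Finsupp.single x (1 : k)) = f x := by
  rw [Finsupp.lift_apply, Finsupp.sum_single_index (by simp), one_smul]

lemma modT_single {K : ℕ} (a : Fin K → Bool) (p q : Fin K) (j : Fin K → Box lam) :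
    modT k lam a p q (Finsupp.single j (1 : k)) =
    (if a q then
      if q < p then
        (if (j p).1 ≤ (j q).1 then Finsupp.single (j ∘ Equiv.swap p q) (1 : k) else 0)
      else
        (if (j q).1 < (j p).1 then -Finsupp.single (j ∘ Equiv.swap p q) (1 : k) else 0)
    else
      if q < p then
        (if j p = j q then
          -∑ c ∈ univ.filter (fun c : Box lam => (j p).1 ≤ c.1),
            Finsupp.single (Function.update (Function.update j p c) q c) (1 : k)
        else 0)
      else
        (if j p = j q then
          ∑ c ∈ univ.filter (fun c : Box lam => c.1 < (j p).1),
            Finsupp.single (Function.update (Function.update j p c) q c) (1 : k)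
        else 0)) := by
  rw [modT, lift_single]

lemma Cmap_single (i : Fin (kk + ll) → Box lam) :
    Cmap k lam kk ll (Finsupp.single i (1 : k)) =
      ∑ c : Box lam, Finsupp.single (insB i c) (1 : k) := by
  rw [Cmap, lift_single]

end Helpers
section Main

variable {k : Type*} [CommRing k] {ℓ : ℕ} {lam : Fin ℓ → ℕ} {kk ll : ℕ}

lemma lemA (k : Type*) [CommRing k] {ℓ : ℕ} (lam : Fin ℓ → ℕ) (kk ll : ℕ)
    (a : Fin kk → Bool) (b : Fin ll → Bool) (p q : Fin (kk + ll)) :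
    Cmap k lam kk ll ∘ₗ modT k lam (catW a b) p q =
      modT k lam (insW a true false b) (ins2 kk ll p) (ins2 kk ll q) ∘ₗ Cmap k lam kk ll := by
  apply lhom_ext1
  intro j
  rw [LinearMap.comp_apply, LinearMap.comp_apply, modT_single, Cmap_single, map_sum]
  simp only [modT_single, insW_ins2, insB_ins2, ins2_lt_iff]
  by_cases h1 : catW a b q <;>
    by_cases h2 : q < p <;>
      simp only [h1, h2, Bool.false_eq_true, if_true, if_false]
  · by_cases h3 : (j p).1 ≤ (j q).1 <;> simp only [h3, if_true, if_false]
    · rw [Cmap_single]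
      exact Finset.sum_congr rfl fun c _ => by rw [swap_insB]
    · simp
  · by_cases h3 : (j q).1 < (j p).1 <;> simp only [h3, if_true, if_false]
    · rw [map_neg, Cmap_single, ← Finset.sum_neg_distrib]
      exact Finset.sum_congr rfl fun c _ => by rw [swap_insB]
    · simp
  · by_cases h3 : j p = j q <;> simp only [h3, if_true, if_false]
    · simp only [map_neg, map_sum, Cmap_single, update_insB, Finset.sum_neg_distrib]
      congr 1
      exact Finset.sum_comm
    · simp
  · by_cases h3 : j p = j q <;> simp only [h3, if_true, if_false]
    · simp only [map_sum, Cmap_single, update_insB]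
      exact Finset.sum_comm
    · simp

lemma key_v (j : Fin (kk + ll) → Box lam) (c : Box lam) (p : Fin (kk + ll))
    (h1 : kk < kk + ll + 2) (h2 : kk + 1 < kk + ll + 2) :
    insB j c ∘ (Equiv.swap (ins2 kk ll p) ⟨kk, h1⟩) =
      Function.update (Function.update (insB j (j p)) (ins2 kk ll p) c) ⟨kk + 1, h2⟩ c := by
  have hPk : ins2 kk ll p ≠ ⟨kk, h1⟩ := fun h => (ins2_ne p).1 (by rw [h])
  have hPk1 : ins2 kk ll p ≠ ⟨kk + 1, h2⟩ := fun h => (ins2_ne p).2 (by rw [h])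
  have hkk1 : (⟨kk, h1⟩ : Fin (kk + ll + 2)) ≠ ⟨kk + 1, h2⟩ := by
    simp [Fin.ext_iff]
  funext s
  simp only [Function.comp_apply]
  by_cases hsP : s = ins2 kk ll p
  · subst hsP
    rw [Equiv.swap_apply_left, insB_kk,
      Function.update_of_ne hPk1, Function.update_self]
  by_cases hs1 : s = ⟨kk, h1⟩
  · rw [hs1, Equiv.swap_apply_right, insB_ins2,
      Function.update_of_ne hkk1, Function.update_of_ne (Ne.symm hPk), insB_kk]
  by_cases hs2 : s = ⟨kk + 1, h2⟩
  · rw [hs2, Equiv.swap_apply_of_ne_of_ne (hs2 ▸ fun h => hsP (hs2 ▸ h)) (Ne.symm hkk1),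
      Function.update_self, insB_kk1]
  · have hv1 : s.val ≠ kk := fun h => hs1 (Fin.ext h)
    have hv2 : s.val ≠ kk + 1 := fun h => hs2 (Fin.ext h)
    obtain ⟨u, hu⟩ := exists_ins2 s hv1 hv2
    rw [Equiv.swap_apply_of_ne_of_ne hsP hs1, Function.update_of_ne hs2,
      Function.update_of_ne hsP, ← hu, insB_ins2, insB_ins2]

lemma lemV (k : Type*) [CommRing k] {ℓ : ℕ} (lam : Fin ℓ → ℕ) (kk ll : ℕ)
    (a : Fin kk → Bool) (b : Fin ll → Bool) (p : Fin (kk + ll)) :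
    modT k lam (insW a true false b) (ins2 kk ll p) ⟨kk, by omega⟩ ∘ₗ Cmap k lam kk ll +
      modT k lam (insW a true false b) (ins2 kk ll p) ⟨kk + 1, by omega⟩ ∘ₗ Cmap k lam kk ll
      = 0 := by
  apply lhom_ext1
  intro j
  simp only [LinearMap.add_apply, LinearMap.comp_apply, LinearMap.zero_apply, Cmap_single,
    map_sum, modT_single, insW_kk, insW_kk1, insB_kk, insB_kk1, insB_ins2, if_true,
    Bool.false_eq_true, if_false]
  have hQ1P : (⟨kk, by omega⟩ : Fin (kk + ll + 2)) < ins2 kk ll p ↔ ¬ (p.val < kk) := by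
    simp only [Fin.lt_def, ins2_val]; split_ifs <;> simp <;> omega
  have hQ2P : (⟨kk + 1, by omega⟩ : Fin (kk + ll + 2)) < ins2 kk ll p ↔ ¬ (p.val < kk) := by
    simp only [Fin.lt_def, ins2_val]; split_ifs <;> simp <;> omega
  by_cases hp : p.val < kk
  · simp only [hQ1P, hQ2P, hp, not_true_eq_false, if_false]
    have e2 : (∑ c : Box lam, if j p = c then
        (∑ c' ∈ univ.filter (fun c' : Box lam => c'.1 < (j p).1),
          Finsupp.single (Function.update (Function.update (insB j c) (ins2 kk ll p) c')
            ⟨kk + 1, by omega⟩ c') (1 : k)) else 0) =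
        ∑ c' ∈ univ.filter (fun c' : Box lam => c'.1 < (j p).1),
          Finsupp.single (Function.update (Function.update (insB j (j p)) (ins2 kk ll p) c')
            ⟨kk + 1, by omega⟩ c') (1 : k) := by
      rw [Finset.sum_ite_eq]; simp
    rw [e2]
    have e1 : (∑ c : Box lam, if c.1 < (j p).1 then
        -Finsupp.single (insB j c ∘ (Equiv.swap (ins2 kk ll p) ⟨kk, by omega⟩)) (1 : k) else 0) =
        -∑ c ∈ univ.filter (fun c : Box lam => c.1 < (j p).1),
          Finsupp.single (Function.update (Function.update (insB j (j p)) (ins2 kk ll p) c)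
            ⟨kk + 1, by omega⟩ c) (1 : k) := by
      rw [← Finset.sum_neg_distrib, ← Finset.sum_filter]
      exact Finset.sum_congr rfl fun c _ => by rw [key_v]
    rw [e1, neg_add_cancel]
  · simp only [hQ1P, hQ2P, hp, not_false_eq_true, if_true]
    have e2 : (∑ c : Box lam, if j p = c then
        -(∑ c' ∈ univ.filter (fun c' : Box lam => (j p).1 ≤ c'.1),
          Finsupp.single (Function.update (Function.update (insB j c) (ins2 kk ll p) c')
            ⟨kk + 1, by omega⟩ c') (1 : k)) else 0) =
        -∑ c' ∈ univ.filter (fun c' : Box lam => (j p).1 ≤ c'.1),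
          Finsupp.single (Function.update (Function.update (insB j (j p)) (ins2 kk ll p) c')
            ⟨kk + 1, by omega⟩ c') (1 : k) := by
      rw [Finset.sum_ite_eq]; simp
    rw [e2]
    have e1 : (∑ c : Box lam, if (j p).1 ≤ c.1 then
        Finsupp.single (insB j c ∘ (Equiv.swap (ins2 kk ll p) ⟨kk, by omega⟩)) (1 : k) else 0) =
        ∑ c ∈ univ.filter (fun c : Box lam => (j p).1 ≤ c.1),
          Finsupp.single (Function.update (Function.update (insB j (j p)) (ins2 kk ll p) c)
            ⟨kk + 1, by omega⟩ c) (1 : k) := by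
      rw [← Finset.sum_filter]
      exact Finset.sum_congr rfl fun c _ => by rw [key_v]
    rw [e1, add_neg_cancel]

end Main

/-- Lemma 4.3: interaction of `C` with the modified transpositions.  Positions
`p, q` are 1-based as in the paper. -/
theorem Cmap_modT
    (k : Type*) [CommRing k] {ℓ : ℕ} (hℓ : 1 ≤ ℓ)
    (lam : Fin ℓ → ℕ) (hpos : ∀ j, 0 < lam j) (huni : Unimodular lam)
    (m : Fin ℓ → k) (kk ll : ℕ)
    (a : Fin kk → Bool) (b : Fin ll → Bool)
    (p : ℕ) (hp1 : 1 ≤ p) (hpK : p ≤ kk + ll + 2)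
    (hup : insW a false false b ⟨p - 1, by omega⟩ = true) :
    -- (i)
    (∀ (q : ℕ) (hq1 : 1 ≤ q) (hqk : q ≤ kk) (hpk : p ≤ kk) (hqp : q ≠ p),
      (Cmap k lam kk ll) ∘ₗ (modT k lam (catW a b) ⟨p - 1, by omega⟩ ⟨q - 1, by omega⟩) =
        (modT k lam (insW a true false b) ⟨p - 1, by omega⟩ ⟨q - 1, by omega⟩) ∘ₗ
          (Cmap k lam kk ll)) ∧
    -- (ii)
    (∀ (q : ℕ) (hpk : p ≤ kk) (hq1 : kk + 2 < q) (hqK : q ≤ kk + ll + 2),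
      (Cmap k lam kk ll) ∘ₗ (modT k lam (catW a b) ⟨p - 1, by omega⟩ ⟨q - 2 - 1, by omega⟩) =
        (modT k lam (insW a true false b) ⟨p - 1, by omega⟩ ⟨q - 1, by omega⟩) ∘ₗ
          (Cmap k lam kk ll)) ∧
    -- (iii)
    (∀ (q : ℕ) (hpk : kk + 2 < p) (hq1 : 1 ≤ q) (hqk : q ≤ kk),
      (Cmap k lam kk ll) ∘ₗ (modT k lam (catW a b) ⟨p - 2 - 1, by omega⟩ ⟨q - 1, by omega⟩) =
        (modT k lam (insW a true false b) ⟨p - 1, by omega⟩ ⟨q - 1, by omega⟩) ∘ₗ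
          (Cmap k lam kk ll)) ∧
    -- (iv)
    (∀ (q : ℕ) (hpk : kk + 2 < p) (hq1 : kk + 2 < q) (hqK : q ≤ kk + ll + 2) (hqp : q ≠ p),
      (Cmap k lam kk ll) ∘ₗ
          (modT k lam (catW a b) ⟨p - 2 - 1, by omega⟩ ⟨q - 2 - 1, by omega⟩) =
        (modT k lam (insW a true false b) ⟨p - 1, by omega⟩ ⟨q - 1, by omega⟩) ∘ₗ
          (Cmap k lam kk ll)) ∧
    -- (v)
    ((modT k lam (insW a true false b) ⟨p - 1, by omega⟩ ⟨kk, by omega⟩) ∘ₗ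
        (Cmap k lam kk ll) +
      (modT k lam (insW a true false b) ⟨p - 1, by omega⟩ ⟨kk + 1, by omega⟩) ∘ₗ
        (Cmap k lam kk ll) = 0) := by
  have hne1 : p - 1 ≠ kk := by
    intro h
    rw [show (⟨p - 1, by omega⟩ : Fin (kk + ll + 2)) = ⟨kk, by omega⟩ from Fin.ext h,
      insW_kk] at hup
    exact absurd hup (by simp)
  have hne2 : p - 1 ≠ kk + 1 := by
    intro h
    rw [show (⟨p - 1, by omega⟩ : Fin (kk + ll + 2)) = ⟨kk + 1, by omega⟩ from Fin.ext h,
      insW_kk1] at hup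
    exact absurd hup (by simp)
  refine ⟨?_, ?_, ?_, ?_, ?_⟩
  · intro q hq1 hqk hpk hqp
    have h := lemA k lam kk ll a b ⟨p - 1, by omega⟩ ⟨q - 1, by omega⟩
    rw [ins2_eq_of_lt (show p - 1 < kk by omega), ins2_eq_of_lt (show q - 1 < kk by omega)] at h
    exact h
  · intro q hpk hq1 hqK
    have h := lemA k lam kk ll a b ⟨p - 1, by omega⟩ ⟨q - 2 - 1, by omega⟩
    rw [ins2_eq_of_lt (show p - 1 < kk by omega), ins2_eq_of_ge (show kk ≤ q - 2 - 1 by omega),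
      show (⟨q - 2 - 1 + 2, by omega⟩ : Fin (kk + ll + 2)) = ⟨q - 1, by omega⟩ from
        Fin.ext (by simp; omega)] at h
    exact h
  · intro q hpk hq1 hqk
    have h := lemA k lam kk ll a b ⟨p - 2 - 1, by omega⟩ ⟨q - 1, by omega⟩
    rw [ins2_eq_of_ge (show kk ≤ p - 2 - 1 by omega), ins2_eq_of_lt (show q - 1 < kk by omega),
      show (⟨p - 2 - 1 + 2, by omega⟩ : Fin (kk + ll + 2)) = ⟨p - 1, by omega⟩ from
        Fin.ext (by simp; omega)] at h
    exact h
  · intro q hpk hq1 hqK hqp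
    have h := lemA k lam kk ll a b ⟨p - 2 - 1, by omega⟩ ⟨q - 2 - 1, by omega⟩
    rw [ins2_eq_of_ge (show kk ≤ p - 2 - 1 by omega), ins2_eq_of_ge (show kk ≤ q - 2 - 1 by omega),
      show (⟨p - 2 - 1 + 2, by omega⟩ : Fin (kk + ll + 2)) = ⟨p - 1, by omega⟩ from
        Fin.ext (by simp; omega),
      show (⟨q - 2 - 1 + 2, by omega⟩ : Fin (kk + ll + 2)) = ⟨q - 1, by omega⟩ from
        Fin.ext (by simp; omega)] at h
    exact h
  · by_cases hp : p - 1 < kk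
    · have h := lemV k lam kk ll a b ⟨p - 1, by omega⟩
      rw [ins2_eq_of_lt hp] at h
      exact h
    · have hge : kk + 2 ≤ p - 1 := by omega
      have h := lemV k lam kk ll a b ⟨p - 2 - 1, by omega⟩
      rw [ins2_eq_of_ge (show kk ≤ p - 2 - 1 by omega),
        show (⟨p - 2 - 1 + 2, by omega⟩ : Fin (kk + ll + 2)) = ⟨p - 1, by omega⟩ from
          Fin.ext (by simp; omega)] at h
      exact h
end

section
/- Let k be an algebraically closed field of characteristic zero, ℓ ≥ 1, r ≥ 1 an integer, and m_1,…,m_ℓ ∈ k. For each unimodular sequence λ = (λ_1,…,λ_ℓ) of positive integers with λ_i ≥ r for all i, define the point δ(λ) = (δ_1,…,δ_ℓ) ∈ k^ℓ by δ_K := ∑_{i+j=K, i,j≥0} h_i(m_1,…,m_ℓ) · e_j(λ_1−m_1,…,λ_ℓ−m_ℓ) for K = 1,…,ℓ (the integers λ_p viewed in k via the natural map). Then the set of all such points δ(λ) is Zariski dense in k^ℓ: every polynomial p ∈ k[X_1,…,X_ℓ] satisfying p(δ(λ)) = 0 for all unimodular sequences λ of positive integers with min_i λ_i ≥ r is the zero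 polynomial. -/
open Finset

/-- The complete homogeneous symmetric polynomial of degree `d` in the family of
elements `x i`, `i ∈ S`: the sum of all monomials of total degree `d`. -/
noncomputable def hsym {R : Type*} [CommRing R] {ι : Type*} [DecidableEq ι]
    (S : Finset ι) (x : ι → R) (d : ℕ) : R :=
  ∑ t ∈ S.sym d, ((t : Multiset ι).map x).prod

/-- The elementary symmetric polynomial of degree `d` in the family of elements
`x i`, `i ∈ S`: the sum of all products of `d` distinct members. -/
noncomputable def esym {R : Type*} [CommRing R] {ι : Type*} [DecidableEq ι]
    (S : Finset ι) (x : ι → R) (d : ℕ) : R :=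
  ∑ t ∈ S.powersetCard d, ∏ i ∈ t, x i

lemma hsym_zero {R : Type*} [CommRing R] {ι : Type*} [DecidableEq ι]
    (S : Finset ι) (x : ι → R) : hsym S x 0 = 1 := by
  rw [hsym, Finset.sym_zero, Finset.sum_singleton]
  rfl

lemma esym_zero {R : Type*} [CommRing R] {ι : Type*} [DecidableEq ι]
    (S : Finset ι) (x : ι → R) : esym S x 0 = 1 := by
  simp [esym]

lemma map_esym {R S' : Type*} [CommRing R] [CommRing S'] {ι : Type*} [DecidableEq ι]
    (φ : R →+* S') (T : Finset ι) (x : ι → R) (d : ℕ) :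
    φ (esym T x d) = esym T (fun i => φ (x i)) d := by
  simp [esym, map_sum, map_prod]

/-- A multivariate polynomial over a char-zero domain vanishing at all natural-number
points is zero. -/
lemma grid_zero {k : Type*} [CommRing k] [IsDomain k] [CharZero k] :
    ∀ {n : ℕ} (q : MvPolynomial (Fin n) k),
      (∀ a : Fin n → ℕ, MvPolynomial.eval (fun i => (a i : k)) q = 0) → q = 0 := by
  intro n
  induction n with
  | zero =>
    intro q h
    apply MvPolynomial.funext (q := 0)
    intro x
    rw [map_zero]
    have : x = fun i : Fin 0 => ((finZeroElim (α := fun _ => ℕ) i : ℕ) : k) :=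
      funext fun i => i.elim0
    rw [this]
    exact h _
  | succ n ih =>
    intro q h
    apply (MvPolynomial.finSuccEquiv k n).injective
    simp only [map_zero]
    ext i : 1
    rw [Polynomial.coeff_zero]
    apply ih
    intro a
    have hpoly : Polynomial.map (MvPolynomial.eval (fun j => ((a j : k))))
        (MvPolynomial.finSuccEquiv k n q) = 0 := by
      apply Polynomial.eq_zero_of_infinite_isRoot
      apply Set.Infinite.mono (s := Set.range (fun b : ℕ => (b : k)))
      · rintro _ ⟨b, rfl⟩
        simp only [Set.mem_setOf_eq, Polynomial.IsRoot.def]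
        rw [← MvPolynomial.eval_eq_eval_mv_eval']
        have hb := h (Fin.cons b a)
        have hfun : (Fin.cons (↑b) fun j => ((a j : k))) =
            fun j : Fin (n+1) => (((Fin.cons b a : Fin (n+1) → ℕ) j : ℕ) : k) := by
          funext j
          refine Fin.cases ?_ ?_ j <;> simp
        rw [hfun]
        exact hb
      · exact Set.infinite_range_of_injective Nat.cast_injective
    have := congrArg (fun P => Polynomial.coeff P i) hpoly
    simpa [MvPolynomial.coeff_eval_eq_eval_coeff] using this

/-- Triangular solve: `Evals h y (K+1)` is defined so that
`∑_{i+j=K+1} h i * Evals h y j = y K`, given `h 0 = 1`. -/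
noncomputable def Evals {k : Type*} [Field k] (h : ℕ → k) (y : ℕ → k) : ℕ → k
  | 0 => 1
  | (K+1) => y K - ∑ i ∈ (Finset.range (K+1)).attach, h (K+1-i.1) * Evals h y i.1
decreasing_by exact Finset.mem_range.mp i.2

lemma Evals_zero {k : Type*} [Field k] (h y : ℕ → k) : Evals h y 0 = 1 := by
  rw [Evals]

lemma Evals_spec {k : Type*} [Field k] (h y : ℕ → k) (hh0 : h 0 = 1) (K : ℕ) :
    ∑ ij ∈ Finset.HasAntidiagonal.antidiagonal (K+1), h ij.1 * Evals h y ij.2 = y K := by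
  rw [Finset.Nat.sum_antidiagonal_eq_sum_range_succ (fun a b => h a * Evals h y b)]
  rw [Finset.sum_range_succ']
  have h1 : ∀ i ∈ Finset.range (K+1), h (i+1) * Evals h y (K+1-(i+1))
      = h (i+1) * Evals h y (K-i) := by
    intro i hi
    congr 2
    omega
  rw [Finset.sum_congr rfl h1]
  have h2 : ∑ i ∈ Finset.range (K+1), h (i+1) * Evals h y (K-i)
      = ∑ i ∈ Finset.range (K+1), h (K+1-i) * Evals h y i := by
    rw [← Finset.sum_range_reflect]
    refine Finset.sum_congr rfl fun j hj => ?_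
    have hj' : j ≤ K := by simpa [Nat.lt_succ_iff] using hj
    congr 2 <;> omega
  rw [h2]
  have h3 : Evals h y (K+1) = y K - ∑ i ∈ Finset.range (K+1), h (K+1-i) * Evals h y i := by
    rw [Evals, Finset.sum_attach (Finset.range (K+1)) (fun i => h (K+1-i) * Evals h y i)]
  rw [Nat.sub_zero, hh0, h3]
  ring

open Polynomial in
lemma exists_esym {k : Type*} [Field k] [IsAlgClosed k] (ℓ : ℕ) (E : ℕ → k) (hE0 : E 0 = 1) :
    ∃ z : Fin ℓ → k, ∀ d, d ≤ ℓ → esym Finset.univ z d = E d := by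
  classical
  set P : Polynomial k := ∑ i ∈ Finset.range (ℓ+1), Polynomial.monomial i ((-1)^(ℓ-i) * E (ℓ-i))
    with hP
  have hcoeff : ∀ j, j ≤ ℓ → P.coeff j = (-1)^(ℓ-j) * E (ℓ-j) := by
    intro j hj
    rw [hP, Polynomial.finset_sum_coeff]
    simp only [Polynomial.coeff_monomial]
    rw [Finset.sum_ite_eq' (Finset.range (ℓ+1)) j]
    simp [Nat.lt_succ_iff, hj]
  have hdeg : P.natDegree ≤ ℓ := by
    refine Polynomial.natDegree_sum_le_of_forall_le _ _ fun i hi => ?_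
    exact le_trans (Polynomial.natDegree_monomial_le _) (by simpa [Nat.lt_succ_iff] using hi)
  have hcl : P.coeff ℓ = 1 := by rw [hcoeff ℓ le_rfl]; simp [hE0]
  have hmon : P.Monic := Polynomial.monic_of_natDegree_le_of_coeff_eq_one ℓ hdeg hcl
  have hndeg : P.natDegree = ℓ :=
    le_antisymm hdeg (Polynomial.le_natDegree_of_ne_zero (by rw [hcl]; exact one_ne_zero))
  have hsplits : P.Splits := IsAlgClosed.splits P
  have hcard : Multiset.card P.roots = ℓ := by
    rw [← hndeg]
    exact (Polynomial.splits_iff_card_roots.mp hsplits)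
  have hprod : P = (P.roots.map fun a => X - C a).prod :=
    hsplits.eq_prod_roots_of_monic hmon
  obtain ⟨l, hl⟩ := Quotient.exists_rep P.roots
  have hlen : l.length = ℓ := by rw [← hcard, ← hl]; rfl
  set z : Fin ℓ → k := fun i => l.getD i.val 0 with hz
  have hmap : (Finset.univ.val.map z) = P.roots := by
    rw [← hl]
    show ((List.finRange ℓ).map z : Multiset k) = (l : Multiset k)
    congr 1
    apply List.ext_getElem
    · simp [hlen]
    · intro i h1 h2
      simp [hz, List.getD_eq_getElem, h2]
  refine ⟨z, fun d hd => ?_⟩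
  have hvieta := Multiset.prod_X_sub_C_coeff P.roots (k := ℓ - d) (by rw [hcard]; omega)
  rw [← hprod, hcard] at hvieta
  have hd' : ℓ - (ℓ - d) = d := by omega
  rw [hd', hcoeff (ℓ - d) (by omega), hd'] at hvieta
  have hesymm : esym Finset.univ z d = P.roots.esymm d := by
    rw [← hmap, Finset.esymm_map_val]
    rfl
  rw [hesymm]
  field_simp at hvieta
  exact hvieta.symm

open Fin.NatCast

/-- Zariski density: any polynomial vanishing at all the parameter points
`δ(λ) = (δ_1,…,δ_ℓ)`, for `λ` a unimodular sequence of positive integers with all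
parts `≥ r`, is the zero polynomial. -/
theorem delta_points_zariski_dense
    (k : Type*) [Field k] [IsAlgClosed k] [CharZero k]
    (ℓ : ℕ) (hℓ : 1 ≤ ℓ) (r : ℕ) (hr : 1 ≤ r) (m : Fin ℓ → k)
    (p : MvPolynomial (Fin ℓ) k)
    (hp : ∀ lam : Fin ℓ → ℕ, (∀ i, 0 < lam i) → Unimodular lam → (∀ i, r ≤ lam i) →
      MvPolynomial.eval
        (fun K : Fin ℓ =>
          ∑ ij ∈ Finset.HasAntidiagonal.antidiagonal (K.val + 1),
            hsym Finset.univ m ij.1 *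
              esym Finset.univ (fun q : Fin ℓ => (lam q : k) - m q) ij.2) p = 0) :
    p = 0 := by
  classical
  obtain ⟨n, rfl⟩ : ∃ n, ℓ = n + 1 := ⟨ℓ - 1, by omega⟩
  -- The polynomial map `D` realizing `δ` symbolically.
  set D : Fin (n+1) → MvPolynomial (Fin (n+1)) k := fun K =>
    ∑ ij ∈ Finset.HasAntidiagonal.antidiagonal (K.val + 1),
      MvPolynomial.C (hsym Finset.univ m ij.1) *
        esym Finset.univ (fun q : Fin (n+1) => MvPolynomial.X q - MvPolynomial.C (m q)) ij.2
    with hD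
  have hevalD : ∀ (x : Fin (n+1) → k) (K : Fin (n+1)),
      MvPolynomial.eval x (D K) = ∑ ij ∈ Finset.HasAntidiagonal.antidiagonal (K.val+1),
        hsym Finset.univ m ij.1 * esym Finset.univ (fun q => x q - m q) ij.2 := by
    intro x K
    rw [hD, map_sum]
    refine Finset.sum_congr rfl fun ij _ => ?_
    rw [map_mul, MvPolynomial.eval_C, map_esym]
    have : (fun i => MvPolynomial.eval x (MvPolynomial.X i - MvPolynomial.C (m i)))
        = fun q => x q - m q := by
      funext q
      simp
    rw [this]
  set Q : MvPolynomial (Fin (n+1)) k := MvPolynomial.bind₁ D p with hQ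
  have hQeval : ∀ x : Fin (n+1) → k,
      MvPolynomial.eval x Q = MvPolynomial.eval
        (fun K : Fin (n+1) => ∑ ij ∈ Finset.HasAntidiagonal.antidiagonal (K.val+1),
          hsym Finset.univ m ij.1 * esym Finset.univ (fun q => x q - m q) ij.2) p := by
    intro x
    have h1 : MvPolynomial.aeval x (MvPolynomial.bind₁ D p)
        = MvPolynomial.aeval (fun K => MvPolynomial.aeval x (D K)) p :=
      MvPolynomial.aeval_bind₁ x D p
    have h2 : MvPolynomial.eval x Q
        = MvPolynomial.eval (fun K => MvPolynomial.eval x (D K)) p := h1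
    rw [h2]
    exact congrArg (fun g => MvPolynomial.eval g p) (funext (hevalD x))
  -- The monotone reparametrization.
  set s : Fin (n+1) → MvPolynomial (Fin (n+1)) k := fun i =>
    MvPolynomial.C (r : k) + ∑ j ∈ Finset.range (i.val+1), MvPolynomial.X ((j : Fin (n+1)))
    with hs
  set Q' : MvPolynomial (Fin (n+1)) k := MvPolynomial.bind₁ s Q with hQ'def
  have hQ' : Q' = 0 := by
    apply grid_zero
    intro a
    set lam : Fin (n+1) → ℕ := fun i => r + ∑ j ∈ Finset.range (i.val+1), a ((j : Fin (n+1)))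
      with hlam
    have hevals : ∀ i, MvPolynomial.eval (fun t => ((a t : k))) (s i) = (lam i : k) := by
      intro i
      rw [hs, hlam]
      push_cast
      simp [map_sum]
    have e1 : MvPolynomial.eval (fun i => (a i : k)) Q'
        = MvPolynomial.eval (fun i => (lam i : k)) Q := by
      have h1 : MvPolynomial.aeval (fun i => (a i : k)) (MvPolynomial.bind₁ s Q)
          = MvPolynomial.aeval (fun K => MvPolynomial.aeval (fun i => (a i : k)) (s K)) Q :=
        MvPolynomial.aeval_bind₁ _ s Q
      have h2 : MvPolynomial.eval (fun i => (a i : k)) Q'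
          = MvPolynomial.eval (fun K => MvPolynomial.eval (fun i => (a i : k)) (s K)) Q := h1
      rw [h2]
      exact congrArg (fun g => MvPolynomial.eval g Q) (funext hevals)
    rw [e1, hQeval]
    have hpos : ∀ i, 0 < lam i := fun i =>
      lt_of_lt_of_le hr (le_trans (Nat.le_add_right r _) le_rfl)
    have hge : ∀ i, r ≤ lam i := fun i => Nat.le_add_right r _
    have huni : Unimodular lam := by
      refine ⟨Fin.last n, fun i j hij _ => ?_, fun i j hi hij => ?_⟩
      · apply Nat.add_le_add_left
        apply Finset.sum_le_sum_of_subset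
        apply Finset.range_subset_range.mpr
        have : i.val ≤ j.val := hij
        omega
      · have hi' : i = Fin.last n := le_antisymm (Fin.le_last i) hi
        have hj' : j = Fin.last n := le_antisymm (Fin.le_last j) (hi' ▸ hij)
        rw [hi', hj']
    exact hp lam hpos huni hge
  -- Undo the reparametrization: `Q = 0`.
  set f : ℕ → MvPolynomial (Fin (n+1)) k := fun j =>
    if j = 0 then MvPolynomial.C (r : k) else MvPolynomial.X (((j-1 : ℕ) : Fin (n+1))) with hf
  set u : Fin (n+1) → MvPolynomial (Fin (n+1)) k := fun i => MvPolynomial.X i - f i.val with hu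
  have hQzero : Q = 0 := by
    have hcomp : MvPolynomial.bind₁ u Q' = Q := by
      rw [hQ'def, MvPolynomial.bind₁_bind₁]
      have hsu : ∀ i, MvPolynomial.bind₁ u (s i) = MvPolynomial.X i := by
        intro i
        rw [hs]
        simp only [map_add, map_sum, MvPolynomial.bind₁_C_right, MvPolynomial.bind₁_X_right]
        have hterm : ∀ j ∈ Finset.range (i.val+1), u ((j : Fin (n+1))) = f (j+1) - f j := by
          intro j hj
          have hj' : j < n+1 := lt_of_lt_of_le (Finset.mem_range.mp hj) i.isLt
          rw [hu, hf]
          simp [Fin.val_cast_of_lt hj']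
        rw [Finset.sum_congr rfl hterm, Finset.sum_range_sub f]
        have hf0 : f 0 = MvPolynomial.C (r : k) := by simp [hf]
        have hfi : f (i.val+1) = MvPolynomial.X i := by
          simp [hf, Fin.cast_val_eq_self]
        rw [hf0, hfi]
        ring
      have : (fun i => MvPolynomial.bind₁ u (s i)) = MvPolynomial.X := funext hsu
      rw [this, MvPolynomial.bind₁_X_left]
      rfl
    rw [← hcomp, hQ', map_zero]
  -- Surjectivity of `δ` and conclusion.
  have hzero : ∀ y : Fin (n+1) → k, MvPolynomial.eval y p = 0 := by
    intro y
    set h' : ℕ → k := fun i => hsym Finset.univ m i with hh'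
    set y' : ℕ → k := fun K => if h : K < n+1 then y ⟨K, h⟩ else 0 with hy'
    obtain ⟨z, hz⟩ := exists_esym (n+1) (Evals h' y') (Evals_zero _ _)
    set x : Fin (n+1) → k := fun q => z q + m q with hx
    have h0 := hQeval x
    rw [hQzero, map_zero] at h0
    have hδ : (fun K : Fin (n+1) => ∑ ij ∈ Finset.HasAntidiagonal.antidiagonal (K.val+1),
        hsym Finset.univ m ij.1 * esym Finset.univ (fun q => x q - m q) ij.2) = y := by
      funext K
      have hxz : (fun q => x q - m q) = z := by
        funext q
        rw [hx]
        ring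
      rw [hxz]
      have hterm : ∀ ij ∈ Finset.HasAntidiagonal.antidiagonal (K.val+1),
          hsym Finset.univ m ij.1 * esym Finset.univ z ij.2
            = h' ij.1 * Evals h' y' ij.2 := by
        intro ij hij
        have hmem := Finset.HasAntidiagonal.mem_antidiagonal.mp hij
        have h2 : ij.2 ≤ n+1 := by omega
        rw [hz ij.2 h2, hh']
      rw [Finset.sum_congr rfl hterm,
        Evals_spec h' y' (by rw [hh']; exact hsym_zero _ _) K.val]
      rw [hy']
      simp [K.isLt]
    rw [hδ] at h0
    exact h0.symm
  exact MvPolynomial.funext fun x => by rw [map_zero]; exact hzero x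
end
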